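/- For p ≥ 1, the number of pairs (ζ, α) ∈ F₂^p × F₂^p satisfying ζ·α + ζ₁ + α₁ = 1 (mod 2), where ζ₁ and α₁ denote the first coordinates of ζ and α, equals 2^{p−1}(2^p + 1). -/

import Mathlib

def pdot {p : ℕ} (ζ α : Fin p → ZMod 2) : ZMod 2 := ∑ i, ζ i * α i

lemma pdot_add_right {p : ℕ} (ζ α β : Fin p → ZMod 2) :
    pdot ζ (α + β) = pdot ζ α + pdot ζ β := by
  simp [pdot, mul_add, Finset.sum_add_distrib]

lemma pdot_add_left {p : ℕ} (ζ ζ' α : Fin p → ZMod 2) :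
    pdot (ζ + ζ') α = pdot ζ α + pdot ζ' α := by
  simp [pdot, add_mul, Finset.sum_add_distrib]

lemma pdot_single_right {p : ℕ} (ζ : Fin p → ZMod 2) (i : Fin p) :
    pdot ζ (Pi.single i 1) = ζ i := by
  simp [pdot, Pi.single_apply, mul_ite]

lemma pdot_single_left {p : ℕ} (α : Fin p → ZMod 2) (i : Fin p) :
    pdot (Pi.single i 1) α = α i := by
  simp [pdot, Pi.single_apply, ite_mul]

lemma card_fiber_nonzero {p : ℕ} (ζ : Fin p → ZMod 2) (hζ : ζ ≠ 0) :
    2 * (Finset.univ.filter fun α => pdot ζ α = 0).card = 2 ^ p := by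
  obtain ⟨i, hi⟩ : ∃ i, ζ i ≠ 0 := by
    by_contra h; push_neg at h; exact hζ (funext fun i => h i)
  have hi1 : ζ i = 1 := by
    have : ∀ x : ZMod 2, x ≠ 0 → x = 1 := by decide
    exact this _ hi
  have key : (Finset.univ.filter fun α => pdot ζ α = 0).card
      = (Finset.univ.filter fun α : Fin p → ZMod 2 => ¬ pdot ζ α = 0).card := by
    apply Finset.card_nbij' (fun α => α + Pi.single i 1) (fun α => α + Pi.single i 1)
    · intro α hα
      simp only [Finset.mem_coe, Finset.mem_filter, Finset.mem_univ, true_and] at hα ⊢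
      rw [pdot_add_right, pdot_single_right, hα, hi1]
      decide
    · intro α hα
      simp only [Finset.mem_coe, Finset.mem_filter, Finset.mem_univ, true_and] at hα ⊢
      rw [pdot_add_right, pdot_single_right, hi1]
      have : ∀ x : ZMod 2, ¬ x = 0 → x + 1 = 0 := by decide
      exact this _ hα
    · intro α _; funext j; simp [add_assoc, CharTwo.add_self_eq_zero]
    · intro α _; funext j; simp [add_assoc, CharTwo.add_self_eq_zero]
  have total := Finset.card_filter_add_card_filter_not
    (s := (Finset.univ : Finset (Fin p → ZMod 2))) (p := fun α => pdot ζ α = 0)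
  rw [Finset.card_univ, Fintype.card_fun] at total
  simp only [Fintype.card_fin, ZMod.card] at total
  omega

lemma card_pdot_zero {p : ℕ} (hp : 1 ≤ p) :
    (Finset.univ.filter fun za : (Fin p → ZMod 2) × (Fin p → ZMod 2) =>
        pdot za.1 za.2 = 0).card = 2 ^ (p - 1) * (2 ^ p + 1) := by
  have hsum : (Finset.univ.filter fun za : (Fin p → ZMod 2) × (Fin p → ZMod 2) =>
      pdot za.1 za.2 = 0).card
      = ∑ ζ : Fin p → ZMod 2, (Finset.univ.filter fun α => pdot ζ α = 0).card := by
    rw [Finset.card_eq_sum_card_fiberwise (f := Prod.fst) (t := Finset.univ)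
      (fun _ _ => Finset.mem_univ _)]
    refine Finset.sum_congr rfl fun ζ _ => ?_
    apply Finset.card_nbij' (fun za => za.2) (fun α => (ζ, α))
    · intro za hza
      simp only [Finset.mem_coe, Finset.mem_filter, Finset.mem_univ, true_and] at hza ⊢
      rw [← hza.2]; exact hza.1
    · intro α hα
      simp only [Finset.mem_coe, Finset.mem_filter, Finset.mem_univ, true_and] at hα ⊢
      exact ⟨hα, trivial⟩
    · intro za hza
      simp only [Finset.mem_coe, Finset.mem_filter, Finset.mem_univ, true_and] at hza
      rw [← hza.2]
    · intro α _; rfl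
  rw [hsum]
  obtain ⟨n, rfl⟩ : ∃ n, p = n + 1 := ⟨p - 1, (Nat.succ_pred_eq_of_pos hp).symm⟩
  have hzero : (Finset.univ.filter fun α : Fin (n+1) → ZMod 2 =>
      pdot (0 : Fin (n+1) → ZMod 2) α = 0).card = 2 ^ (n+1) := by
    have : (Finset.univ.filter fun α : Fin (n+1) → ZMod 2 =>
        pdot (0 : Fin (n+1) → ZMod 2) α = 0) = Finset.univ := by
      apply Finset.filter_true_of_mem
      intro α _; simp [pdot]
    rw [this, Finset.card_univ, Fintype.card_fun]
    simp
  rw [← Finset.add_sum_erase _ _ (Finset.mem_univ (0 : Fin (n+1) → ZMod 2)), hzero]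
  have hconst : ∀ ζ ∈ Finset.univ.erase (0 : Fin (n+1) → ZMod 2),
      (Finset.univ.filter fun α => pdot ζ α = 0).card = 2 ^ n := by
    intro ζ hζ
    have := card_fiber_nonzero ζ (Finset.ne_of_mem_erase hζ)
    rw [pow_succ] at this; omega
  rw [Finset.sum_congr rfl hconst, Finset.sum_const, Finset.card_erase_of_mem (Finset.mem_univ _),
    Finset.card_univ, Fintype.card_fun]
  simp only [Fintype.card_fin, ZMod.card, smul_eq_mul, Nat.add_sub_cancel]
  have h1 : 1 ≤ 2 ^ n := Nat.one_le_two_pow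
  rw [pow_succ, Nat.sub_mul, one_mul]
  have h3 : 2 ^ n * 2 * 2 ^ n = 2 ^ n * (2 ^ n * 2) := by ring
  have h4 : 2 ^ n ≤ 2 ^ n * (2 ^ n * 2) := by nlinarith
  have h5 : 2 ^ n * (2 ^ n * 2 + 1) = 2 ^ n * (2 ^ n * 2) + 2 ^ n := by ring
  omega

theorem stmt_16 (p : ℕ) (hp : 1 ≤ p) :
    (Finset.univ.filter fun za : (Fin p → ZMod 2) × (Fin p → ZMod 2) =>
        pdot za.1 za.2 + za.1 ⟨0, hp⟩ + za.2 ⟨0, hp⟩ = 1).card =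
      2 ^ (p - 1) * (2 ^ p + 1) := by
  set i : Fin p := ⟨0, hp⟩ with hi
  set e : Fin p → ZMod 2 := Pi.single i 1 with he
  have hpe : ∀ ζ α : Fin p → ZMod 2,
      pdot (ζ + e) (α + e) = pdot ζ α + ζ i + α i + 1 := by
    intro ζ α
    rw [pdot_add_left, pdot_add_right, pdot_add_right, pdot_single_right,
      pdot_single_left, pdot_single_right, he, Pi.single_eq_same]
    ring
  have hinv : ∀ za : (Fin p → ZMod 2) × (Fin p → ZMod 2),
      (za.1 + e + e, za.2 + e + e) = za := by
    intro za
    have : ∀ x : Fin p → ZMod 2, x + e + e = x := by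
      intro x; funext j; simp [add_assoc, CharTwo.add_self_eq_zero]
    rw [this, this]
  have hcard : (Finset.univ.filter fun za : (Fin p → ZMod 2) × (Fin p → ZMod 2) =>
        pdot za.1 za.2 + za.1 i + za.2 i = 1).card
      = (Finset.univ.filter fun za : (Fin p → ZMod 2) × (Fin p → ZMod 2) =>
        pdot za.1 za.2 = 0).card := by
    apply Finset.card_nbij' (fun za => (za.1 + e, za.2 + e)) (fun za => (za.1 + e, za.2 + e))
    · intro za hza
      simp only [Finset.mem_coe, Finset.mem_filter, Finset.mem_univ, true_and] at hza ⊢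
      rw [hpe, hza]
      decide
    · intro za hza
      simp only [Finset.mem_coe, Finset.mem_filter, Finset.mem_univ, true_and] at hza ⊢
      rw [hpe, hza]
      have hadd : ∀ x : Fin p → ZMod 2, ∀ j, (x + e) j = x j + e j := fun _ _ => rfl
      rw [hadd, hadd, he, Pi.single_eq_same]
      have : ∀ x y : ZMod 2, 0 + x + y + 1 + (x + 1) + (y + 1) = 1 := by decide
      exact this _ _
    · intro za _; exact hinv za
    · intro za _; exact hinv za
  rw [hcard]
  exact card_pdot_zero hp
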